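/- Let r ≥ 2 and s be integers with gcd(r, s) = 1 and s nonzero, and let n ≥ 2. Then the cyclic system of n simultaneous congruences r·((∏_{k=1}^n q_k)/q_i) ≡ s (mod |q_i|) for 1 ≤ i ≤ n has only finitely many solutions in nonzero integers (q_1, …, q_n) with gcd(q_1·q_2⋯q_n, s) = 1, and every such solution satisfies max_i |q_i| ≤ (r(n+1))^{2^{n−1}} + |s|. -/

import Mathlib

open Finset

set_option maxHeartbeats 1000000 in
lemma key (r s : ℤ) (hr : 2 ≤ r) (hrs : Int.gcd r s = 1)
    (n : ℕ) (hn : 2 ≤ n) (q : Fin n → ℤ)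
    (h0 : ∀ i, q i ≠ 0)
    (hdvd : ∀ i, q i ∣ r * (∏ k ∈ Finset.univ.erase i, q k) - s)
    (hgs : Int.gcd (∏ i, q i) s = 1) :
    ∀ i, |q i| ≤ (r * ((n : ℤ) + 1)) ^ (2 ^ (n - 1)) + |s| := by
  have hq1 : ∀ i, 1 ≤ |q i| := fun i => Int.one_le_abs (h0 i)
  -- pairwise coprimality
  have hcop : ∀ i j : Fin n, i ≠ j → IsCoprime (q i) (q j) := by
    intro i j hij
    rw [Int.isCoprime_iff_gcd_eq_one]
    have g1 : ((Int.gcd (q i) (q j) : ℤ)) ∣ (∏ k, q k) :=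
      dvd_trans (Int.gcd_dvd_left _ _) (Finset.dvd_prod_of_mem q (mem_univ i))
    have g2 : ((Int.gcd (q i) (q j) : ℤ)) ∣ s := by
      have hje : j ∈ Finset.univ.erase i := by simp [Ne.symm hij]
      have h3 : ((Int.gcd (q i) (q j) : ℤ)) ∣ r * (∏ k ∈ Finset.univ.erase i, q k) :=
        Dvd.dvd.mul_left (dvd_trans (Int.gcd_dvd_right _ _) (Finset.dvd_prod_of_mem q hje)) r
      have h4 : ((Int.gcd (q i) (q j) : ℤ)) ∣ r * (∏ k ∈ Finset.univ.erase i, q k) - s :=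
        dvd_trans (Int.gcd_dvd_left _ _) (hdvd i)
      have := dvd_sub h3 h4
      simpa using this
    have := Int.dvd_gcd g1 g2
    rw [hgs] at this
    exact Nat.dvd_one.mp (by exact_mod_cast this)
  -- subset divisibility
  have hSdvd : ∀ S : Finset (Fin n),
      (∏ k ∈ S, q k) ∣ r * (∑ k ∈ S, ∏ l ∈ Finset.univ.erase k, q l) - s := by
    intro S
    apply Finset.prod_dvd_of_coprime
    · intro i hi j hj hij
      exact hcop i j hij
    · intro j hj
      have hsum : ∑ k ∈ S, ∏ l ∈ Finset.univ.erase k, q l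
          = (∏ l ∈ Finset.univ.erase j, q l) + ∑ k ∈ S.erase j, ∏ l ∈ Finset.univ.erase k, q l := by
        rw [← Finset.sum_erase_add S _ hj]; ring
      rw [hsum]
      have h5 : q j ∣ ∑ k ∈ S.erase j, ∏ l ∈ Finset.univ.erase k, q l := by
        apply Finset.dvd_sum
        intro k hk
        have : j ∈ Finset.univ.erase k := by
          simp [Ne.symm (Finset.ne_of_mem_erase hk)]
        exact Finset.dvd_prod_of_mem q this
      have h6 : r * ((∏ l ∈ Finset.univ.erase j, q l)
          + ∑ k ∈ S.erase j, ∏ l ∈ Finset.univ.erase k, q l) - s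
          = (r * (∏ l ∈ Finset.univ.erase j, q l) - s)
            + r * ∑ k ∈ S.erase j, ∏ l ∈ Finset.univ.erase k, q l := by ring
      rw [h6]
      exact dvd_add (hdvd j) (Dvd.dvd.mul_left h5 r)
  -- nonvanishing
  have hDne : ∀ S : Finset (Fin n),
      r * (∑ k ∈ S, ∏ l ∈ Finset.univ.erase k, q l) - s ≠ 0 := by
    intro S h
    have hrds : r ∣ s := ⟨_, (sub_eq_zero.mp h).symm⟩
    have := Int.dvd_coe_gcd (dvd_refl r) hrds
    rw [hrs] at this
    have : r ≤ 1 := Int.le_of_dvd one_pos (by exact_mod_cast this)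
    omega
  -- master inequality
  have MI : ∀ (S : Finset (Fin n)) (m : ℤ), 0 ≤ m → (∀ k ∈ S, m ≤ |q k|) →
      (∏ k ∈ S, |q k|) * m ≤ r * n * (∏ k, |q k|) + |s| * m := by
    intro S m hm0 hmS
    have h1 : (∏ k ∈ S, |q k|) ≤ |r * (∑ k ∈ S, ∏ l ∈ Finset.univ.erase k, q l) - s| := by
      rw [← Finset.abs_prod]
      exact Int.le_of_dvd (abs_pos.mpr (hDne S)) ((abs_dvd _ _).mpr ((dvd_abs _ _).mpr (hSdvd S)))
    have h2 : |r * (∑ k ∈ S, ∏ l ∈ Finset.univ.erase k, q l) - s|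
        ≤ r * (∑ k ∈ S, ∏ l ∈ Finset.univ.erase k, |q l|) + |s| := by
      calc |r * (∑ k ∈ S, ∏ l ∈ Finset.univ.erase k, q l) - s|
          ≤ |r * (∑ k ∈ S, ∏ l ∈ Finset.univ.erase k, q l)| + |s| := by
            rw [sub_eq_add_neg]
            exact le_trans (abs_add_le _ _) (by rw [abs_neg])
        _ ≤ r * (∑ k ∈ S, ∏ l ∈ Finset.univ.erase k, |q l|) + |s| := by
            gcongr
            rw [abs_mul, abs_of_nonneg (by linarith : (0:ℤ) ≤ r)]
            gcongr
            calc |∑ k ∈ S, ∏ l ∈ Finset.univ.erase k, q l|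
                ≤ ∑ k ∈ S, |∏ l ∈ Finset.univ.erase k, q l| := Finset.abs_sum_le_sum_abs _ _
              _ = ∑ k ∈ S, ∏ l ∈ Finset.univ.erase k, |q l| := by
                  refine Finset.sum_congr rfl fun k _ => Finset.abs_prod _ _
    have h3 : (∑ k ∈ S, ∏ l ∈ Finset.univ.erase k, |q l|) * m ≤ (S.card : ℤ) * ∏ k, |q k| := by
      rw [Finset.sum_mul]
      calc ∑ k ∈ S, (∏ l ∈ Finset.univ.erase k, |q l|) * m
          ≤ ∑ k ∈ S, ∏ k, |q k| := by
            apply Finset.sum_le_sum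
            intro k hk
            calc (∏ l ∈ Finset.univ.erase k, |q l|) * m
                ≤ (∏ l ∈ Finset.univ.erase k, |q l|) * |q k| := by
                  apply mul_le_mul_of_nonneg_left (hmS k hk)
                  exact Finset.prod_nonneg fun l _ => abs_nonneg _
              _ = ∏ k, |q k| := Finset.prod_erase_mul _ _ (mem_univ k)
        _ = (S.card : ℤ) * ∏ k, |q k| := by rw [Finset.sum_const, nsmul_eq_mul]
    have hcard : (S.card : ℤ) ≤ n := by
      exact_mod_cast Nat.le_trans (Finset.card_le_univ S) (by simp)
    have hA0 : (0:ℤ) ≤ ∏ k, |q k| := Finset.prod_nonneg fun l _ => abs_nonneg _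
    calc (∏ k ∈ S, |q k|) * m
        ≤ (r * (∑ k ∈ S, ∏ l ∈ Finset.univ.erase k, |q l|) + |s|) * m := by
          apply mul_le_mul_of_nonneg_right (le_trans h1 h2) hm0
      _ = r * ((∑ k ∈ S, ∏ l ∈ Finset.univ.erase k, |q l|) * m) + |s| * m := by ring
      _ ≤ r * ((S.card : ℤ) * ∏ k, |q k|) + |s| * m := by
          have := mul_le_mul_of_nonneg_left h3 (show (0:ℤ) ≤ r by linarith)
          linarith
      _ ≤ r * ((n:ℤ) * ∏ k, |q k|) + |s| * m := by
          have := mul_le_mul_of_nonneg_right hcard hA0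
          nlinarith
      _ = r * n * (∏ k, |q k|) + |s| * m := by ring
  -- sorting
  set f : Fin n → ℤ := fun i => |q i| with hf
  set σ : Equiv.Perm (Fin n) := Tuple.sort f with hσ
  have hmono : Monotone (f ∘ σ) := Tuple.monotone_sort f
  set c : ℕ → ℤ := fun m => if h : m < n then f (σ ⟨m, h⟩) else 1 with hc
  have hcval : ∀ i : Fin n, c i.val = f (σ i) := by
    intro i; simp only [hc, i.isLt, dif_pos, Fin.eta]
  have hc1 : ∀ m, 1 ≤ c m := by
    intro m
    by_cases h : m < n
    · rw [hc]; simp only [dif_pos h]; exact hq1 _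
    · rw [hc]; simp only [dif_neg h]; exact le_refl 1
  have hc0 : ∀ m, (0:ℤ) ≤ c m := fun m => le_trans zero_le_one (hc1 m)
  have hcmono : ∀ a b : ℕ, a ≤ b → b < n → c a ≤ c b := by
    intro a b hab hbn
    have han : a < n := lt_of_le_of_lt hab hbn
    have : (⟨a, han⟩ : Fin n) ≤ ⟨b, hbn⟩ := hab
    have := hmono this
    simpa [hc, dif_pos han, dif_pos hbn] using this
  set A : ℤ := ∏ k, |q k| with hA
  have hArange : A = ∏ k ∈ Finset.range n, c k := by
    rw [hA, ← Fin.prod_univ_eq_prod_range c n]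
    rw [← Equiv.prod_comp σ (fun i => |q i|)]
    exact Finset.prod_congr rfl fun i _ => (hcval i).symm
  have hL1 : ∀ m, 1 ≤ ∏ k ∈ Finset.range m, c k := by
    intro m
    have := Finset.prod_le_prod (f := fun _ => (1:ℤ)) (g := c) (by simp) (fun i _ => hc1 i)
      (s := Finset.range m)
    simpa using this
  have hR1 : ∀ a b : ℕ, 1 ≤ ∏ k ∈ Finset.Ico a b, c k := by
    intro a b
    have := Finset.prod_le_prod (f := fun _ => (1:ℤ)) (g := c) (by simp) (fun i _ => hc1 i)
      (s := Finset.Ico a b)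
    simpa using this
  -- key inequality for tail sets
  have KIm : ∀ m, m < n → (∏ k ∈ Finset.Ico m n, c k) * c m ≤ r * n * A + |s| * c m := by
    intro m hm
    set S : Finset (Fin n) := Finset.image σ (Finset.univ.filter fun i : Fin n => m ≤ i.val)
      with hS
    have hprod : ∏ k ∈ S, |q k| = ∏ k ∈ Finset.Ico m n, c k := by
      rw [hS, Finset.prod_image (fun i _ j _ h => σ.injective h)]
      have e1 : ∏ i ∈ Finset.univ.filter (fun i : Fin n => m ≤ i.val), |q (σ i)|
          = ∏ i : Fin n, (if m ≤ i.val then c i.val else 1) := by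
        rw [Finset.prod_filter]
        refine Finset.prod_congr rfl fun i _ => ?_
        by_cases h : m ≤ i.val
        · simp [h, hcval i, hf]
        · simp [h]
      rw [e1, Fin.prod_univ_eq_prod_range (fun k => if m ≤ k then c k else 1) n]
      rw [Finset.range_eq_Ico, ← Finset.prod_Ico_consecutive _ (Nat.zero_le m) (le_of_lt hm)]
      have e2 : ∏ i ∈ Finset.Ico 0 m, (if m ≤ i then c i else 1) = 1 :=
        Finset.prod_eq_one fun i hi => by
          simp [Nat.not_le.mpr (Finset.mem_Ico.mp hi).2]
      have e3 : ∏ i ∈ Finset.Ico m n, (if m ≤ i then c i else 1) = ∏ i ∈ Finset.Ico m n, c i :=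
        Finset.prod_congr rfl fun i hi => by simp [(Finset.mem_Ico.mp hi).1]
      rw [e2, e3, one_mul]
    have hlow : ∀ k ∈ S, c m ≤ |q k| := by
      intro k hk
      rw [hS, Finset.mem_image] at hk
      obtain ⟨i, hi, rfl⟩ := hk
      have hmi : m ≤ i.val := (Finset.mem_filter.mp hi).2
      have : c m ≤ c i.val := hcmono m i.val hmi i.isLt
      rwa [hcval i] at this
    have := MI S (c m) (hc0 m) hlow
    rwa [hprod] at this
  set B : ℤ := r * ((n : ℤ) + 1) with hB
  have hn0 : (0:ℤ) ≤ (n:ℤ) := Int.natCast_nonneg n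
  have hB0 : (0:ℤ) ≤ B := by nlinarith
  have hrnB : r * (n:ℤ) + r ≤ B := by rw [hB]; ring_nf; omega
  -- Claim 1
  have Claim1 : ∀ m, m + 1 < n → |s| < c (n-1) →
      c m ≤ B * ∏ k ∈ Finset.range m, c k := by
    intro m hm1 hMs
    set L : ℤ := ∏ k ∈ Finset.range m, c k with hLdef
    set R : ℤ := ∏ k ∈ Finset.Ico m n, c k with hRdef
    have hm : m < n := by omega
    have hLR : L * R = A := by
      rw [hArange, hLdef, hRdef, Finset.range_eq_Ico,
        Finset.prod_Ico_consecutive _ (Nat.zero_le m) (le_of_lt hm), Finset.range_eq_Ico]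
    by_contra hcon
    push_neg at hcon
    have hcon' : B * L + 1 ≤ c m := hcon
    have hKI := KIm m hm
    have h2 : R * (c m - r * n * L) ≤ |s| * c m := by
      rw [← hLR] at hKI; nlinarith [hKI]
    have hfac : 1 ≤ c m - r * n * L := by nlinarith [hL1 m]
    have hRle : R ≤ |s| * c m := by nlinarith [hR1 m n, h2, hfac]
    have hpair : c m * c (n-1) ≤ R := by
      have e : R = c m * ((∏ k ∈ Finset.Ico (m+1) (n-1), c k) * c (n-1)) := by
        rw [hRdef, show Finset.Ico m n = Finset.Ico m ((n-1)+1) from by congr 1; omega,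
          Finset.prod_Ico_succ_top (by omega : m ≤ n-1),
          Finset.prod_eq_prod_Ico_succ_bot (by omega : m < n-1) c]
        ring
      have h1 := hR1 (m+1) (n-1)
      have h2 := hc0 (n-1)
      have h3 := hc0 m
      have hkey := mul_le_mul_of_nonneg_right (mul_le_mul_of_nonneg_left h1 h3) h2
      rw [e]
      nlinarith [hkey]
    have h7 : |s| * c m ≤ (c (n-1) - 1) * c m :=
      mul_le_mul_of_nonneg_right (by linarith) (hc0 m)
    nlinarith [hc1 m, hpair, hRle, h7]
  -- Claim 2
  have Claim2' : |s| < c (n-1) → ∀ m, m < n →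
      (∏ k ∈ Finset.range m, c k) ≤ B ^ (2 ^ m - 1) := by
    intro hMs m
    induction m with
    | zero => intro _; simp
    | succ m ih =>
      intro hm
      have hmn : m < n := by omega
      have hLm := ih hmn
      have hcm := Claim1 m hm hMs
      rw [Finset.prod_range_succ]
      have hpow : B ^ (2 ^ (m+1) - 1) = B * (B ^ (2 ^ m - 1)) ^ 2 := by
        rw [← pow_mul, ← pow_succ']
        congr 1
        have h1 : 1 ≤ 2 ^ m := Nat.one_le_two_pow
        have h2 : 2 ^ (m+1) = 2 * 2 ^ m := by rw [pow_succ]; ring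
        omega
      rw [hpow]
      have hLpos := hL1 m
      have hL0 : (0:ℤ) ≤ ∏ k ∈ Finset.range m, c k := le_trans zero_le_one hLpos
      have hBe : (0:ℤ) ≤ B ^ (2 ^ m - 1) := pow_nonneg hB0 _
      calc (∏ k ∈ Finset.range m, c k) * c m
          ≤ (∏ k ∈ Finset.range m, c k) * (B * ∏ k ∈ Finset.range m, c k) :=
            mul_le_mul_of_nonneg_left hcm hL0
        _ = B * ((∏ k ∈ Finset.range m, c k) * (∏ k ∈ Finset.range m, c k)) := by ring
        _ ≤ B * (B ^ (2 ^ m - 1) * B ^ (2 ^ m - 1)) :=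
            mul_le_mul_of_nonneg_left (mul_le_mul hLm hLm hL0 hBe) hB0
        _ = B * (B ^ (2 ^ m - 1)) ^ 2 := by ring
  -- conclusion
  have habs : ∀ i, |q i| ≤ c (n-1) := by
    intro i
    have h1 : |q i| = c ((σ.symm i) : ℕ) := by
      rw [hcval (σ.symm i)]
      simp [hf]
    rw [h1]
    exact hcmono _ _ (by omega) (by omega)
  by_cases hMs : c (n-1) ≤ |s|
  · intro i
    have := le_trans (habs i) hMs
    have hBe : (0:ℤ) ≤ B ^ (2 ^ (n-1)) := pow_nonneg hB0 _
    linarith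
  · push_neg at hMs
    have hKI := KIm (n-1) (by omega)
    have hIco : Finset.Ico (n-1) n = {n-1} := by
      ext k; simp only [Finset.mem_Ico, Finset.mem_singleton]; omega
    rw [hIco, Finset.prod_singleton] at hKI
    set M : ℤ := c (n-1) with hMdef
    set L : ℤ := ∏ k ∈ Finset.range (n-1), c k with hLdef
    have hAL : A = L * M := by
      rw [hArange, hLdef, hMdef, show n = (n-1)+1 from by omega, Finset.prod_range_succ]
      norm_num
    have hM0 : 0 < M := lt_of_lt_of_le zero_lt_one (hc1 _)
    have hMle : M ≤ r * n * L + |s| := by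
      have : M * M ≤ (r * n * L + |s|) * M := by rw [hAL] at hKI; nlinarith [hKI]
      exact le_of_mul_le_mul_right this hM0
    have hLle : L ≤ B ^ (2 ^ (n-1) - 1) := Claim2' hMs (n-1) (by omega)
    have hMfin : M ≤ B ^ (2 ^ (n-1)) + |s| := by
      have hBe : (0:ℤ) ≤ B ^ (2 ^ (n-1) - 1) := pow_nonneg hB0 _
      have hstep : B ^ (2 ^ (n-1)) = B * B ^ (2 ^ (n-1) - 1) := by
        rw [← pow_succ']
        congr 1
        have : 1 ≤ 2 ^ (n-1) := Nat.one_le_two_pow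
        omega
      have h1 : r * (n:ℤ) * L ≤ B * B ^ (2 ^ (n-1) - 1) := by
        have hL0 : (0:ℤ) ≤ L := le_trans zero_le_one (hL1 _)
        have hrn : 0 ≤ r * (n:ℤ) := by nlinarith
        have : r * (n:ℤ) ≤ B := by linarith
        nlinarith [hLle]
      rw [hstep]; linarith
    intro i
    exact le_trans (habs i) hMfin

/-- For `r ≥ 2` the cyclic system of congruences has only
finitely many integer solutions with `gcd(q_1 ⋯ q_n, s) = 1`, all satisfying
`max |q_i| ≤ (r(n+1))^(2^(n-1)) + |s|`. -/
theorem cyclic_congruence_r_ge_two_finite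
    (r s : ℤ) (hr : 2 ≤ r) (hs : s ≠ 0) (hrs : Int.gcd r s = 1)
    (n : ℕ) (hn : 2 ≤ n) :
    {q : Fin n → ℤ |
        (∀ i, q i ≠ 0) ∧
        (∀ i, q i ∣ r * (∏ k ∈ Finset.univ.erase i, q k) - s) ∧
        Int.gcd (∏ i, q i) s = 1}.Finite ∧
    ∀ q : Fin n → ℤ,
      (∀ i, q i ≠ 0) →
      (∀ i, q i ∣ r * (∏ k ∈ Finset.univ.erase i, q k) - s) →
      Int.gcd (∏ i, q i) s = 1 →
      ∀ i, |q i| ≤ (r * ((n : ℤ) + 1)) ^ (2 ^ (n - 1)) + |s| := by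
  set C : ℤ := (r * ((n : ℤ) + 1)) ^ (2 ^ (n - 1)) + |s| with hC
  refine ⟨?_, fun q h0 hd hg => key r s hr hrs n hn q h0 hd hg⟩
  apply Set.Finite.subset (Set.Finite.pi (fun _ : Fin n => Set.finite_Icc (-C) C))
  intro q hq
  obtain ⟨h0, hd, hg⟩ := hq
  intro i _
  have := key r s hr hrs n hn q h0 hd hg i
  rw [← hC] at this
  exact Set.mem_Icc.mpr (abs_le.mp this)
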